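/- If Ω is separating for the polynomial *-algebra P_{L,T}(H) generated by the field operators φ_{L,T}(h), h ∈ H, then H is a separating real subspace, i.e. H ∩ iH = {0}. -/
import Mathlib


/-!
STATEMENT 11: If the Fock vacuum `Ω` is separating for the polynomial
*-algebra `P_{L,T}(H)` generated by the field operators `φ_{L,T}(h)`, `h ∈ H`,
then `H` is a separating real subspace, i.e. `H ∩ iH = {0}`.

Setting: `𝓕` is the twisted Fock space, `ι : 𝓗 → 𝓕` the (isometric)
one-particle embedding, `Ω ∈ 𝓕` the vacuum, and `Φ h = φ_{L,T}(h)` the field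
operators, which are real-linear in the argument, selfadjoint for `h ∈ H` and
satisfy `Φ h Ω = h` (as a one-particle vector).  The polynomial *-algebra is
realized as `Algebra.adjoin ℂ (Φ '' H)`, and "Ω separating" means that
`A Ω = 0 ⟹ A = 0` for its elements.
-/

noncomputable section
open ContinuousLinearMap

/-- If `Ω` is separating for `P_{L,T}(H)`, then
`H ∩ iH = {0}`. -/
theorem separating_vacuum_implies_separating_subspace
    {𝓗 𝓕 : Type*} [NormedAddCommGroup 𝓗] [InnerProductSpace ℂ 𝓗] [CompleteSpace 𝓗]
    [NormedAddCommGroup 𝓕] [InnerProductSpace ℂ 𝓕] [CompleteSpace 𝓕]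
    (H : Submodule ℝ 𝓗)
    (ι : 𝓗 →ₗᵢ[ℂ] 𝓕) (Ω : 𝓕)
    (Φ : 𝓗 → (𝓕 →L[ℂ] 𝓕))
    (hΦ_add : ∀ x y, Φ (x + y) = Φ x + Φ y)
    (hΦ_smul : ∀ (r : ℝ) (x : 𝓗), Φ (r • x) = r • Φ x)
    (hΦ_sa : ∀ h ∈ H, IsSelfAdjoint (Φ h))
    (hΦ_vac : ∀ h ∈ H, Φ h Ω = ι h)
    (hsep : ∀ A ∈ Algebra.adjoin ℂ (Φ '' (H : Set 𝓗)), A Ω = 0 → A = 0) :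
    ∀ x ∈ H, ∀ y ∈ H, x = Complex.I • y → x = 0 := by
  intro x hx y hy hxy
  have hxmem : Φ x ∈ Algebra.adjoin ℂ (Φ '' (H : Set 𝓗)) :=
    Algebra.subset_adjoin ⟨x, hx, rfl⟩
  have hymem : Φ y ∈ Algebra.adjoin ℂ (Φ '' (H : Set 𝓗)) :=
    Algebra.subset_adjoin ⟨y, hy, rfl⟩
  have hAmem : Φ x - Complex.I • Φ y ∈ Algebra.adjoin ℂ (Φ '' (H : Set 𝓗)) :=
    Subalgebra.sub_mem _ hxmem (Subalgebra.smul_mem _ hymem _)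
  have hAΩ : (Φ x - Complex.I • Φ y) Ω = 0 := by
    rw [ContinuousLinearMap.sub_apply, ContinuousLinearMap.smul_apply,
      hΦ_vac x hx, hΦ_vac y hy, hxy, ι.map_smul, sub_self]
  have hA : Φ x = Complex.I • Φ y := by
    have := hsep _ hAmem hAΩ
    linear_combination (norm := module) this
  have hA' : Φ x = -(Complex.I • Φ y) := by
    have h1 := hA
    have h2 : star (Φ x) = star (Complex.I • Φ y) := by rw [hA]
    rw [(hΦ_sa x hx).star_eq, star_smul, (hΦ_sa y hy).star_eq, Complex.star_def,
      Complex.conj_I, neg_smul] at h2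
    exact h2
  have hΦy : Φ y = 0 := by
    have h3 : (2 * Complex.I) • Φ y = 0 := by
      have := hA.symm.trans hA'
      linear_combination (norm := module) this
    have h2I : (2 * Complex.I : ℂ) ≠ 0 := by
      simp [Complex.I_ne_zero]
    exact (smul_eq_zero.mp h3).resolve_left h2I
  have hy0 : y = 0 := by
    have : ι y = 0 := by rw [← hΦ_vac y hy, hΦy]; rfl
    simpa using ι.injective (by simpa using this)
  rw [hxy, hy0, smul_zero]
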